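/- Let R be one of the fields ℚ, ℝ, or ℂ and let H(t) = 1 + r_1 t + r_2 t² + ⋯ ∈ R[[t]] be 2-algebraically rigid. Then F_H satisfies the Riccati equation F_H′(t) = −F_H(t)² + h_1·F_H(t) + (h_2 − h_1²) as formal Laurent series, where h_1 = [H²]_1, h_2 = [H³]_2, and F_H′ is the termwise derivative of F_H. -/

import Mathlib

noncomputable section

namespace RigidGenus

variable {R : Type*} [Field R]

/-- Termwise substitution `t ↦ w·t` on Laurent series: the coefficient of `t^k`
is multiplied by `w^k`. -/
def zscale (w : R) (f : LaurentSeries R) : LaurentSeries R where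
  coeff k := w ^ k * f.coeff k
  isPWO_support' := f.isPWO_support'.mono (fun k hk => by
    simp only [Function.mem_support, ne_eq] at hk ⊢
    exact fun h => hk (by rw [h, mul_zero]))

/-- Termwise derivative of a Laurent series: `(∑ f_k t^k)' = ∑ k f_k t^(k-1)`. -/
def lderiv (f : LaurentSeries R) : LaurentSeries R where
  coeff k := ((k + 1 : ℤ) : R) * f.coeff (k + 1)
  isPWO_support' := by
    have himg : ((fun k : ℤ => k - 1) '' (Function.support f.coeff)).IsPWO :=
      f.isPWO_support'.image_of_monotone (fun a b h => sub_le_sub_right h 1)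
    refine himg.mono (fun k hk => ?_)
    simp only [Function.mem_support, ne_eq] at hk
    exact ⟨k + 1, fun h => hk (by rw [h, mul_zero]), by ring⟩

/-- `F_H = H(t)/t`, as a formal Laurent series. -/
def FH (H : PowerSeries R) : LaurentSeries R :=
  HahnSeries.single (-1 : ℤ) (1 : R) * HahnSeries.ofPowerSeries ℤ R H

/-- `S_H(w_0,…,w_n;t) = ∑_i ∏_{j ≠ i} F_H((w_j - w_i) t)`. -/
def SH (H : PowerSeries R) {n : ℕ} (w : Fin (n + 1) → ℤ) : LaurentSeries R :=
  ∑ i : Fin (n + 1), ∏ j ∈ Finset.univ.erase i, zscale ((w j - w i : ℤ) : R) (FH H)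

/-- `H` is `n`-algebraically rigid: for all `1 ≤ m ≤ n` and pairwise distinct
integers `w_0, …, w_m`, the Laurent series `S_H(w_0,…,w_m;t)` is constant. -/
def AlgRigid (H : PowerSeries R) (n : ℕ) : Prop :=
  ∀ m : ℕ, 1 ≤ m → m ≤ n → ∀ w : Fin (m + 1) → ℤ, Function.Injective w →
    ∀ k : ℤ, k ≠ 0 → (SH H w).coeff k = 0

/-- The formal exponential series `exp (a t)`. -/
def expS (a : R) : PowerSeries R := PowerSeries.mk fun n => a ^ n / n.factorial

/-- The formal sine series `sin (a t)`. -/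
def sinS (a : R) : PowerSeries R :=
  PowerSeries.mk fun n => if n % 2 = 1 then (-1 : R) ^ (n / 2) * a ^ n / n.factorial else 0

/-- The formal cosine series `cos (a t)`. -/
def cosS (a : R) : PowerSeries R :=
  PowerSeries.mk fun n => if n % 2 = 0 then (-1 : R) ^ (n / 2) * a ^ n / n.factorial else 0

/-- `H = D_{a,b}`, the generalized Todd series `t(a·coth(at)+b)`: for `a ≠ 0` it is
characterized by `D_{a,b}(t)·(e^{at} - e^{-at}) = t·(a(e^{at}+e^{-at}) + b(e^{at}-e^{-at}))`,
and `D_{0,b}(t) = 1 + bt`. -/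
def IsDab (a b : R) (H : PowerSeries R) : Prop :=
  (a ≠ 0 ∧ H * (expS a - expS (-a)) =
      PowerSeries.X * (PowerSeries.C a * (expS a + expS (-a)) +
        PowerSeries.C b * (expS a - expS (-a)))) ∨
  (a = 0 ∧ H = 1 + PowerSeries.C b * PowerSeries.X)

/-- `H = G_{a,b}`, the series `t(a·cot(at)+b)`: for `a ≠ 0` it is characterized by
`G_{a,b}(t)·sin(at) = t·(a·cos(at) + b·sin(at))`, and `G_{0,b}(t) = 1 + bt`. -/
def IsGab (a b : R) (H : PowerSeries R) : Prop :=
  (a ≠ 0 ∧ H * sinS a =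
      PowerSeries.X * (PowerSeries.C a * cosS a + PowerSeries.C b * sinS a)) ∨
  (a = 0 ∧ H = 1 + PowerSeries.C b * PowerSeries.X)

/-! ### Auxiliary lemmas -/

open Finset Polynomial

@[simp] lemma zscale_coeff (w : R) (f : LaurentSeries R) (k : ℤ) :
    (zscale w f).coeff k = w ^ k * f.coeff k := rfl

lemma lps_coeff (φ : PowerSeries R) (m : ℤ) :
    (HahnSeries.ofPowerSeries ℤ R φ).coeff m
      = if 0 ≤ m then PowerSeries.coeff m.toNat φ else 0 := by
  split_ifs with h
  · obtain ⟨n, rfl⟩ := Int.eq_ofNat_of_zero_le h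
    rw [HahnSeries.ofPowerSeries_apply_coeff]
    simp
  · rw [HahnSeries.ofPowerSeries_apply, HahnSeries.embDomain_notin_range]
    intro hc
    simp only [Set.mem_range, RelEmbedding.coe_mk, Function.Embedding.coeFn_mk] at hc
    obtain ⟨n, hn⟩ := hc
    have hn' : (n:ℤ) = m := hn
    omega

lemma single_mul_lps_coeff (d : ℤ) (c : R) (φ : PowerSeries R) (k : ℤ) :
    (HahnSeries.single d c * HahnSeries.ofPowerSeries ℤ R φ).coeff k
      = if d ≤ k then c * PowerSeries.coeff (k - d).toNat φ else 0 := by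
  have h1 : k = (k - d) + d := by ring
  rw [h1, HahnSeries.coeff_single_mul_add, lps_coeff]
  split_ifs with h2 h3 h3
  · rw [show k - d + d - d = k - d by ring]
  · omega
  · omega
  · rw [mul_zero]

lemma FH_coeff (H : PowerSeries R) (k : ℤ) :
    (FH H).coeff k = if (-1:ℤ) ≤ k then PowerSeries.coeff (k+1).toNat H else 0 := by
  rw [FH, single_mul_lps_coeff]
  split_ifs with h
  · rw [one_mul, show k - -1 = k + 1 by ring]
  · rfl

lemma zscale_FH (H : PowerSeries R) (a : R) (ha : a ≠ 0) :
    zscale a (FH H) = HahnSeries.single (-1 : ℤ) a⁻¹ *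
      HahnSeries.ofPowerSeries ℤ R (PowerSeries.rescale a H) := by
  ext k
  rw [zscale_coeff, FH_coeff, single_mul_lps_coeff]
  split_ifs with h
  · have : a ^ k = a⁻¹ * a ^ ((k+1).toNat) := by
      rw [← zpow_natCast a, ← zpow_neg_one, ← zpow_add₀ ha]
      congr 1; omega
    rw [show k - -1 = k + 1 by ring, PowerSeries.coeff_rescale, this, mul_assoc]
  · rw [mul_zero]

lemma zscale_mul_zscale (H : PowerSeries R) (a b : R) (ha : a ≠ 0) (hb : b ≠ 0) :
    zscale a (FH H) * zscale b (FH H)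
      = HahnSeries.single (-2 : ℤ) (a⁻¹ * b⁻¹) *
        HahnSeries.ofPowerSeries ℤ R (PowerSeries.rescale a H * PowerSeries.rescale b H) := by
  rw [zscale_FH H a ha, zscale_FH H b hb, mul_mul_mul_comm,
    HahnSeries.single_mul_single, show (-1 : ℤ) + -1 = -2 from rfl, ← map_mul]

lemma zz_coeff (H : PowerSeries R) (a b : R) (ha : a ≠ 0) (hb : b ≠ 0) (n : ℕ) :
    (zscale a (FH H) * zscale b (FH H)).coeff ((n : ℤ) - 2)
      = a⁻¹ * b⁻¹ * ∑ p ∈ antidiagonal n,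
          a ^ p.1 * PowerSeries.coeff p.1 H * (b ^ p.2 * PowerSeries.coeff p.2 H) := by
  rw [zscale_mul_zscale H a b ha hb, single_mul_lps_coeff, if_pos (by omega),
    show ((n:ℤ) - 2 - -2).toNat = n by omega, PowerSeries.coeff_mul]
  congr 1
  exact Finset.sum_congr rfl fun p _ => by
    rw [PowerSeries.coeff_rescale, PowerSeries.coeff_rescale]

lemma SH2 (H : PowerSeries R) (w : Fin 2 → ℤ) :
    SH H w = zscale ((w 1 - w 0 : ℤ) : R) (FH H) + zscale ((w 0 - w 1 : ℤ) : R) (FH H) := by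
  rw [SH, Fin.sum_univ_two,
    show (Finset.univ.erase (0 : Fin 2)) = {1} from by decide,
    show (Finset.univ.erase (1 : Fin 2)) = {0} from by decide,
    Finset.prod_singleton, Finset.prod_singleton]

lemma SH3 (H : PowerSeries R) (w : Fin 3 → ℤ) :
    SH H w = zscale ((w 1 - w 0 : ℤ) : R) (FH H) * zscale ((w 2 - w 0 : ℤ) : R) (FH H)
      + zscale ((w 0 - w 1 : ℤ) : R) (FH H) * zscale ((w 2 - w 1 : ℤ) : R) (FH H)
      + zscale ((w 0 - w 2 : ℤ) : R) (FH H) * zscale ((w 1 - w 2 : ℤ) : R) (FH H) := by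
  rw [SH, Fin.sum_univ_three,
    show (Finset.univ.erase (0 : Fin 3)) = {1, 2} from by decide,
    show (Finset.univ.erase (1 : Fin 3)) = {0, 2} from by decide,
    show (Finset.univ.erase (2 : Fin 3)) = {0, 1} from by decide,
    Finset.prod_insert (by decide), Finset.prod_insert (by decide),
    Finset.prod_insert (by decide), Finset.prod_singleton, Finset.prod_singleton,
    Finset.prod_singleton]

/-- Parity: from `1`-rigidity, the odd-degree coefficients of `H` beyond degree 1 vanish. -/
lemma coeff_odd_eq_zero [CharZero R] (H : PowerSeries R) (hrig : AlgRigid H 2)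
    {n : ℕ} (hodd : Odd n) (h3 : 3 ≤ n) : PowerSeries.coeff n H = 0 := by
  have hinj : Function.Injective (![0, 1] : Fin 2 → ℤ) := by decide
  have h0 := hrig 1 le_rfl (by norm_num) ![0, 1] hinj ((n:ℤ) - 1) (by omega)
  rw [SH2] at h0
  have hw1 : ((![0, 1] : Fin 2 → ℤ) 1 - (![0, 1] : Fin 2 → ℤ) 0 : ℤ) = 1 := by decide
  have hw2 : ((![0, 1] : Fin 2 → ℤ) 0 - (![0, 1] : Fin 2 → ℤ) 1 : ℤ) = -1 := by decide
  rw [hw1, hw2] at h0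
  have heven : Even ((n:ℤ) - 1) := by
    obtain ⟨m, rfl⟩ := hodd
    exact ⟨m, by push_cast; ring⟩
  rw [HahnSeries.coeff_add, zscale_coeff, zscale_coeff] at h0
  rw [Int.cast_one, one_zpow, Int.cast_neg, Int.cast_one, Even.neg_zpow heven, one_zpow] at h0
  have h2 : (2 : R) * (FH H).coeff ((n:ℤ) - 1) = 0 := by linear_combination h0
  have := mul_eq_zero.mp h2
  rcases this with h | h
  · exact absurd h two_ne_zero
  · rw [FH_coeff, if_pos (by omega)] at h
    rw [show ((n:ℤ) - 1 + 1).toNat = n by omega] at h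
    exact h

/-- The key quadratic relation from `2`-rigidity, for even `n ≥ 4`. -/
lemma key_relation [CharZero R] (H : PowerSeries R) (hrig : AlgRigid H 2)
    {n : ℕ} (hn : 4 ≤ n) (heven : Even n) :
    ∑ p ∈ antidiagonal n, PowerSeries.coeff p.1 H * PowerSeries.coeff p.2 H
      + 2 * PowerSeries.coeff (n-1) H * PowerSeries.coeff 1 H
      + ((n : R) - 1) * PowerSeries.coeff n H * PowerSeries.coeff 0 H = 0 := by
  set r : ℕ → R := fun i => PowerSeries.coeff i H with hr
  set P : Polynomial R := ∑ p ∈ antidiagonal n, Polynomial.C (r p.1 * r p.2) *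
      (-(X ^ p.1 * (1 + X) ^ p.2) + Polynomial.C ((-1 : R) ^ p.1) * ((1 + X) * X ^ p.1)
        - X * (1 + X) ^ p.1) with hP
  -- Step 1 : every `x = u + 1`, `u : ℕ`, is a root of `P`.
  have hroot : ∀ u : ℕ, P.eval ((u : R) + 1) = 0 := by
    intro u
    obtain ⟨x, hx0, hx1, hxu⟩ : ∃ x : R, x ≠ 0 ∧ x + 1 ≠ 0 ∧ (u : R) + 1 = x :=
      ⟨(u : R) + 1, Nat.cast_add_one_ne_zero u,
        by push_cast [show ((u:R) + 1) + 1 = ((u+1 : ℕ) : R) + 1 by push_cast; ring]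
           exact Nat.cast_add_one_ne_zero (u+1), rfl⟩
    rw [hxu]
    have hinj : Function.Injective (![0, (u:ℤ)+1, (u:ℤ)+2] : Fin 3 → ℤ) := by
      intro i j hij
      fin_cases i <;> fin_cases j <;> first
        | rfl
        | (exfalso; revert hij; simp; omega)
        | (exfalso; revert hij; simp)
    have h0 := hrig 2 one_le_two le_rfl ![0, (u:ℤ)+1, (u:ℤ)+2] hinj ((n:ℤ) - 2)
      (by omega)
    rw [SH3] at h0
    set w : Fin 3 → ℤ := ![0, (u:ℤ)+1, (u:ℤ)+2] with hw
    have e1 : ((w 1 - w 0 : ℤ) : R) = x := by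
      show (((u:ℤ)+1 - 0 : ℤ) : R) = x
      rw [← hxu]; push_cast; ring
    have e2 : ((w 2 - w 0 : ℤ) : R) = x + 1 := by
      show (((u:ℤ)+2 - 0 : ℤ) : R) = x + 1
      rw [← hxu]; push_cast; ring
    have e3 : ((w 0 - w 1 : ℤ) : R) = -x := by
      show ((0 - ((u:ℤ)+1) : ℤ) : R) = -x
      rw [← hxu]; push_cast; ring
    have e4 : ((w 2 - w 1 : ℤ) : R) = 1 := by
      show (((u:ℤ)+2 - ((u:ℤ)+1) : ℤ) : R) = 1
      push_cast; ring
    have e5 : ((w 0 - w 2 : ℤ) : R) = -(x+1) := by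
      show ((0 - ((u:ℤ)+2) : ℤ) : R) = -(x+1)
      rw [← hxu]; push_cast; ring
    have e6 : ((w 1 - w 2 : ℤ) : R) = -1 := by
      show (((u:ℤ)+1 - ((u:ℤ)+2) : ℤ) : R) = -1
      push_cast; ring
    rw [e1, e2, e3, e4, e5, e6, HahnSeries.coeff_add, HahnSeries.coeff_add] at h0
    rw [zz_coeff H x (x+1) hx0 hx1 n, zz_coeff H (-x) 1 (neg_ne_zero.mpr hx0) one_ne_zero n,
      zz_coeff H (-(x+1)) (-1) (neg_ne_zero.mpr hx1) (neg_ne_zero.mpr one_ne_zero) n] at h0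
    set S1 := ∑ p ∈ antidiagonal n, x ^ p.1 * r p.1 * ((x+1) ^ p.2 * r p.2) with hS1
    set S2 := ∑ p ∈ antidiagonal n, (-x) ^ p.1 * r p.1 * ((1:R) ^ p.2 * r p.2) with hS2
    set S3 := ∑ p ∈ antidiagonal n, (-(x+1)) ^ p.1 * r p.1 * ((-1:R) ^ p.2 * r p.2) with hS3
    have hexp : P.eval x = -1 * S1 + (x+1) * S2 + (-x) * S3 := by
      rw [hP, Polynomial.eval_finset_sum, hS1, hS2, hS3, Finset.mul_sum, Finset.mul_sum,
        Finset.mul_sum, ← Finset.sum_add_distrib, ← Finset.sum_add_distrib]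
      refine Finset.sum_congr rfl fun p hp => ?_
      have hpn : p.1 + p.2 = n := mem_antidiagonal.mp hp
      have hev : (-1:R) ^ p.1 * (-1:R) ^ p.2 = 1 := by
        rw [← pow_add, hpn]; exact Even.neg_one_pow heven
      simp only [eval_mul, eval_add, eval_sub, eval_neg, eval_pow, eval_C, eval_X, eval_one]
      rw [neg_pow (x+1) p.1, neg_pow x p.1]
      linear_combination x * (x+1) ^ p.1 * r p.1 * r p.2 * hev
    rw [hexp]
    have hne : -x ≠ 0 := neg_ne_zero.mpr hx0
    have hne2 : -(x+1) ≠ 0 := neg_ne_zero.mpr hx1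
    rw [inv_neg, inv_neg, inv_one] at h0
    field_simp at h0
    have hq : -(x*(x+1)) ≠ 0 := by
      intro h
      rcases mul_eq_zero.mp (neg_eq_zero.mp h) with h' | h'
      · exact hx0 h'
      · exact hx1 h'
    have hfin2 : -(x*(x+1)) * (-1*S1 + (x+1)*S2 + -x*S3) = 0 := by linear_combination x * (x+1) * h0
    exact (mul_eq_zero.mp hfin2).resolve_left hq
  -- Step 2 : infinitely many roots, hence `P = 0`.
  have hP0 : P = 0 := by
    apply Polynomial.eq_zero_of_infinite_isRoot
    have hinj : Function.Injective (fun u : ℕ => (u : R) + 1) := by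
      intro a b hab
      have : (a : R) = b := by linear_combination hab
      exact_mod_cast this
    refine (Set.infinite_range_of_injective hinj).mono ?_
    rintro _ ⟨u, rfl⟩
    exact hroot u
  -- Step 3 : read off the coefficient of `X ^ n`.
  have hc : P.coeff n = 0 := by rw [hP0, Polynomial.coeff_zero]
  have hterm : ∀ p ∈ antidiagonal n,
      (Polynomial.C (r p.1 * r p.2) *
        (-(X ^ p.1 * (1 + X) ^ p.2) + Polynomial.C ((-1 : R) ^ p.1) * ((1 + X) * X ^ p.1)
          - X * (1 + X) ^ p.1)).coeff n
      = r p.1 * r p.2 * (-1 + ((-1:R) ^ p.1 *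
          ((if n = p.1 then (1:R) else 0) + (if n = p.1 + 1 then (1:R) else 0))
          - (p.1.choose (n-1) : R))) := by
    intro p hp
    have hpn : p.1 + p.2 = n := mem_antidiagonal.mp hp
    have c1 : ((X : Polynomial R) ^ p.1 * (1 + X) ^ p.2).coeff n = 1 := by
      conv_lhs => rw [show n = p.2 + p.1 by omega]
      rw [Polynomial.coeff_X_pow_mul, Polynomial.coeff_one_add_X_pow, Nat.choose_self,
        Nat.cast_one]
    have c2 : (((1:Polynomial R) + X) * X ^ p.1).coeff n
        = (if n = p.1 then (1:R) else 0) + (if n = p.1 + 1 then (1:R) else 0) := by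
      rw [show ((1:Polynomial R) + X) * X ^ p.1 = X ^ p.1 + X ^ (p.1+1) by ring,
        Polynomial.coeff_add, Polynomial.coeff_X_pow, Polynomial.coeff_X_pow]
    have c3 : ((X : Polynomial R) * (1 + X) ^ p.1).coeff n = (p.1.choose (n-1) : R) := by
      conv_lhs => rw [show n = (n-1) + 1 by omega]
      rw [Polynomial.coeff_X_mul, Polynomial.coeff_one_add_X_pow]
    rw [Polynomial.coeff_C_mul, Polynomial.coeff_sub, Polynomial.coeff_add,
      Polynomial.coeff_neg, Polynomial.coeff_C_mul, c1, c2, c3]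
    ring
  rw [hP, Polynomial.finset_sum_coeff, Finset.sum_congr rfl hterm] at hc
  -- split off the two exceptional terms
  have hsplit : ∑ p ∈ antidiagonal n,
      r p.1 * r p.2 * (-1 + ((-1:R) ^ p.1 *
          ((if n = p.1 then (1:R) else 0) + (if n = p.1 + 1 then (1:R) else 0))
          - (p.1.choose (n-1) : R)))
      = ∑ p ∈ antidiagonal n, -(r p.1 * r p.2)
        + ∑ p ∈ antidiagonal n, r p.1 * r p.2 * ((-1:R) ^ p.1 *
            ((if n = p.1 then (1:R) else 0) + (if n = p.1 + 1 then (1:R) else 0))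
            - (p.1.choose (n-1) : R)) := by
    rw [← Finset.sum_add_distrib]
    exact Finset.sum_congr rfl fun p _ => by ring
  rw [hsplit] at hc
  have hpair : ∑ p ∈ antidiagonal n, r p.1 * r p.2 * ((-1:R) ^ p.1 *
        ((if n = p.1 then (1:R) else 0) + (if n = p.1 + 1 then (1:R) else 0))
        - (p.1.choose (n-1) : R))
      = -2 * (r (n-1) * r 1) + ((1:R) - n) * (r n * r 0) := by
    have hsub : ({(n-1, 1), (n, 0)} : Finset (ℕ × ℕ)) ⊆ antidiagonal n := by
      intro p hp
      rcases Finset.mem_insert.mp hp with h | h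
      · rw [h]; rw [HasAntidiagonal.mem_antidiagonal]; omega
      · rw [Finset.mem_singleton.mp h]; rw [HasAntidiagonal.mem_antidiagonal]; omega
    have hvanish : ∀ p ∈ antidiagonal n, p ∉ ({(n-1, 1), (n, 0)} : Finset (ℕ × ℕ)) →
        r p.1 * r p.2 * ((-1:R) ^ p.1 *
          ((if n = p.1 then (1:R) else 0) + (if n = p.1 + 1 then (1:R) else 0))
          - (p.1.choose (n-1) : R)) = 0 := by
      intro p hp hnp
      have hpn : p.1 + p.2 = n := mem_antidiagonal.mp hp
      simp only [Finset.mem_insert, Finset.mem_singleton] at hnp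
      push_neg at hnp
      have hne1 : p ≠ (n-1, 1) := hnp.1
      have hne2 : p ≠ (n, 0) := hnp.2
      have hlt : p.1 < n - 1 := by
        rcases lt_or_ge p.1 (n-1) with h | h
        · exact h
        · exfalso
          rcases eq_or_lt_of_le h with h' | h'
          · exact hne1 (Prod.ext h'.symm (by omega))
          · have : p.1 = n := by omega
            exact hne2 (Prod.ext this (by omega))
      rw [if_neg (by omega), if_neg (by omega), Nat.choose_eq_zero_of_lt (by omega),
        Nat.cast_zero]
      ring
    rw [← Finset.sum_subset hsub hvanish]
    rw [Finset.sum_insert (by simp), Finset.sum_singleton]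
    have hodd : Odd (n - 1) := Nat.Even.sub_odd (by omega) heven odd_one
    have hc1 : ((n-1).choose (n-1) : R) = 1 := by rw [Nat.choose_self, Nat.cast_one]
    have hc2 : (n.choose (n-1) : R) = (n : R) := by
      rw [Nat.choose_symm (by omega : 1 ≤ n), Nat.choose_one_right]
    simp only [if_neg (by omega : ¬ n = n - 1), if_pos (show n = (n-1) + 1 by omega),
      if_pos (rfl : n = n), if_neg (by omega : ¬ n = n + 1)]
    rw [hodd.neg_one_pow, heven.neg_one_pow, hc1, hc2]
    norm_num
    ring
  rw [hpair, Finset.sum_neg_distrib] at hc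
  linear_combination -hc

lemma FH_sq (H : PowerSeries R) :
    (FH H) ^ 2 = HahnSeries.single (-2 : ℤ) (1 : R) *
      HahnSeries.ofPowerSeries ℤ R (H ^ 2) := by
  rw [sq, FH, mul_mul_mul_comm, HahnSeries.single_mul_single,
    show (-1 : ℤ) + -1 = -2 from rfl, one_mul, ← map_mul, ← sq]

lemma C_mul_FH (c : R) (H : PowerSeries R) :
    (HahnSeries.C c : LaurentSeries R) * FH H
      = HahnSeries.single (-1 : ℤ) c * HahnSeries.ofPowerSeries ℤ R H := by
  rw [FH, ← mul_assoc, HahnSeries.C_apply, HahnSeries.single_mul_single, zero_add, mul_one]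

/-- if `H = 1 + r₁t + ⋯` is 2-algebraically rigid, then `F_H` satisfies
the Riccati equation `F_H′ = −F_H² + h₁·F_H + (h₂ − h₁²)`, with `h₁ = [H²]₁`, `h₂ = [H³]₂`. -/
theorem FH_riccati_of_algRigid_two {R : Type*} [Field R] [CharZero R]
    (H : PowerSeries R) (hH : PowerSeries.constantCoeff H = 1)
    (hrig : AlgRigid H 2) :
    lderiv (FH H)
      = -(FH H ^ 2)
        + (HahnSeries.C (PowerSeries.coeff 1 (H ^ 2)) : LaurentSeries R) * FH H
        + (HahnSeries.C (PowerSeries.coeff 2 (H ^ 3)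
            - (PowerSeries.coeff 1 (H ^ 2)) ^ 2) : LaurentSeries R) := by
  classical
  have hr0 : PowerSeries.coeff 0 H = 1 := by
    rw [PowerSeries.coeff_zero_eq_constantCoeff, hH]
  have ha1 : (antidiagonal 1 : Finset (ℕ × ℕ)) = {(0,1),(1,0)} := by decide
  have ha2 : (antidiagonal 2 : Finset (ℕ × ℕ)) = {(0,2),(1,1),(2,0)} := by decide
  have q0 : PowerSeries.coeff 0 (H ^ 2) = 1 := by
    rw [sq, PowerSeries.coeff_mul]
    simp [hr0]
  have hh1 : PowerSeries.coeff 1 (H ^ 2) = 2 * PowerSeries.coeff 1 H := by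
    rw [sq, PowerSeries.coeff_mul, ha1, Finset.sum_insert (by decide),
      Finset.sum_singleton, hr0]
    ring
  have q2 : PowerSeries.coeff 2 (H ^ 2)
      = 2 * PowerSeries.coeff 2 H + (PowerSeries.coeff 1 H) ^ 2 := by
    rw [sq, PowerSeries.coeff_mul, ha2, Finset.sum_insert (by decide),
      Finset.sum_insert (by decide), Finset.sum_singleton, hr0]
    ring
  have hh2 : PowerSeries.coeff 2 (H ^ 3)
      = 3 * PowerSeries.coeff 2 H + 3 * (PowerSeries.coeff 1 H) ^ 2 := by
    rw [pow_succ, PowerSeries.coeff_mul, ha2, Finset.sum_insert (by decide),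
      Finset.sum_insert (by decide), Finset.sum_singleton, q0, hh1, q2, hr0]
    ring
  ext k
  rw [show (lderiv (FH H)).coeff k = ((k + 1 : ℤ) : R) * (FH H).coeff (k+1) from rfl]
  rw [HahnSeries.coeff_add, HahnSeries.coeff_add, HahnSeries.coeff_neg, FH_sq,
    single_mul_lps_coeff, C_mul_FH, single_mul_lps_coeff, FH_coeff,
    HahnSeries.C_apply, HahnSeries.coeff_single]
  rcases lt_or_ge k (-2) with hk | hk
  · rw [if_neg (by omega), if_neg (by omega), if_neg (by omega), if_neg (by omega)]
    ring
  · obtain ⟨m, rfl⟩ : ∃ m : ℕ, k = (m : ℤ) - 2 := ⟨(k+2).toNat, by omega⟩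
    rw [if_pos (by omega), if_pos (by omega),
      show ((m:ℤ) - 2 + 1 + 1).toNat = m by omega,
      show ((m:ℤ) - 2 - -2).toNat = m by omega,
      show ((m:ℤ) - 2 + 1 : ℤ) = (m:ℤ) - 1 from by ring]
    rcases m with _ | m
    · -- m = 0
      rw [if_neg (by omega), if_neg (by omega), q0, hr0]
      norm_num
    rcases m with _ | m
    · -- m = 1
      norm_num
      rw [hH]
      ring
    rcases m with _ | m
    · -- m = 2
      norm_num
      rw [q2, hh1, hh2]
      ring
    · -- m ≥ 3
      obtain ⟨m', hm'⟩ : ∃ m', m + 1 + 1 + 1 = m' := ⟨_, rfl⟩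
      rw [hm']
      have hm3 : 3 ≤ m' := by omega
      rw [if_pos (by omega), if_neg (by omega),
        show (((m':ℕ):ℤ) - 2 - -1).toNat = m' - 1 by omega, hh1]
      have hsqm : PowerSeries.coeff m' (H ^ 2)
          = ∑ p ∈ antidiagonal m', PowerSeries.coeff p.1 H * PowerSeries.coeff p.2 H := by
        rw [sq, PowerSeries.coeff_mul]
      rw [hsqm]
      push_cast
      by_cases hpar : Even m'
      · have h4 : 4 ≤ m' := by rcases hpar with ⟨t, ht⟩; omega
        have hkey := key_relation H hrig (n := m') (by omega) hpar
        rw [hr0] at hkey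
        have hodd : PowerSeries.coeff (m' - 1) H = 0 :=
          coeff_odd_eq_zero H hrig (Nat.Even.sub_odd (by omega) hpar odd_one) (by omega)
        linear_combination hkey - 4 * PowerSeries.coeff 1 H * hodd
      · have hoddm : Odd m' := Nat.not_even_iff_odd.mp hpar
        have hzm : PowerSeries.coeff m' H = 0 :=
          coeff_odd_eq_zero H hrig hoddm (by omega)
        have hpairsub : ({(1, m'-1), (m'-1, 1)} : Finset (ℕ × ℕ)) ⊆ antidiagonal m' := by
          intro p hp
          rcases Finset.mem_insert.mp hp with h | h
          · rw [h, HasAntidiagonal.mem_antidiagonal]; omega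
          · rw [Finset.mem_singleton.mp h, HasAntidiagonal.mem_antidiagonal]; omega
        have hvan : ∀ p ∈ antidiagonal m', p ∉ ({(1, m'-1), (m'-1, 1)} : Finset (ℕ × ℕ)) →
            PowerSeries.coeff p.1 H * PowerSeries.coeff p.2 H = 0 := by
          intro p hp hnp
          have hpn : p.1 + p.2 = m' := mem_antidiagonal.mp hp
          simp only [Finset.mem_insert, Finset.mem_singleton] at hnp
          push_neg at hnp
          rcases Nat.even_or_odd p.1 with he | ho
          · have hodd2 : Odd p.2 := by
              rcases Nat.even_or_odd p.2 with he2 | ho2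
              · exfalso; exact hpar (by rw [← hpn]; exact he.add he2)
              · exact ho2
            have h21 : p.2 ≠ 1 := by
              intro h1
              exact hnp.2 (Prod.ext (by omega) h1)
            have : PowerSeries.coeff p.2 H = 0 := by
              apply coeff_odd_eq_zero H hrig hodd2
              rcases hodd2 with ⟨t, ht⟩
              omega
            rw [this, mul_zero]
          · have h11 : p.1 ≠ 1 := by
              intro h1
              exact hnp.1 (Prod.ext h1 (by omega))
            have : PowerSeries.coeff p.1 H = 0 := by
              apply coeff_odd_eq_zero H hrig ho
              rcases ho with ⟨t, ht⟩
              omega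
            rw [this, zero_mul]
        have hSum : ∑ p ∈ antidiagonal m',
            PowerSeries.coeff p.1 H * PowerSeries.coeff p.2 H
            = PowerSeries.coeff 1 H * PowerSeries.coeff (m'-1) H
              + PowerSeries.coeff (m'-1) H * PowerSeries.coeff 1 H := by
          rw [← Finset.sum_subset hpairsub hvan,
            Finset.sum_insert (by simp [Prod.ext_iff]; omega), Finset.sum_singleton]
        rw [hSum, hzm]
        ring

end RigidGenus
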